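/- For any graph G with blocks B_1,...,B_t, the basis number of G equals the maximum of the basis numbers of its blocks: b(G) = max_{1≤j≤t} b(B_j). -/

import Mathlib

open scoped Classical

noncomputable section

/-- Helper: quotients of finite types are finite. -/
noncomputable def quotFintype {α : Type} [Fintype α] (r : α → α → Prop) : Fintype (Quot r) :=
  Fintype.ofSurjective (Quot.mk r) fun q => Quot.exists_rep q

/-- A finite multigraph.  Each edge `e` carries an (arbitrarily chosen) ordering of its two
endpoints, `fst e` and `snd e`; a loop is an edge with `fst e = snd e`. -/
structure Multigraph where
  V : Type
  E : Type
  fintV : Fintype V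
  fintE : Fintype E
  fst : E → V
  snd : E → V

attribute [instance] Multigraph.fintV Multigraph.fintE

namespace Multigraph

variable (G : Multigraph)

/-- Incidence of a vertex and an edge, modulo 2 (a loop is incident twice, i.e. 0 mod 2). -/
noncomputable def inc (v : G.V) (e : G.E) : ZMod 2 :=
  (if G.fst e = v then 1 else 0) + (if G.snd e = v then 1 else 0)

/-- The cycle space of `G` over `F_2`: characteristic vectors of edge sets in which every
vertex has even degree (i.e. Eulerian subgraphs), with addition = symmetric difference. -/
noncomputable def cycleSpace : Submodule (ZMod 2) (G.E → ZMod 2) where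
  carrier := {x | ∀ v : G.V, ∑ e : G.E, G.inc v e * x e = 0}
  zero_mem' := by intro v; simp
  add_mem' := by
    intro a b ha hb v
    have h : ∀ e : G.E, G.inc v e * (a + b) e = G.inc v e * a e + G.inc v e * b e := by
      intro e
      show G.inc v e * (a e + b e) = G.inc v e * a e + G.inc v e * b e
      ring
    rw [Finset.sum_congr rfl fun e _ => h e, Finset.sum_add_distrib, ha v, hb v, add_zero]
  smul_mem' := by
    intro c x hx v
    have h : ∀ e : G.E, G.inc v e * (c • x) e = c * (G.inc v e * x e) := by
      intro e
      show G.inc v e * (c * x e) = c * (G.inc v e * x e)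
      ring
    rw [Finset.sum_congr rfl fun e _ => h e, ← Finset.mul_sum, hx v, mul_zero]

/-- The charge of an edge `e` with respect to a collection `B` of (characteristic vectors of)
subgraphs: the number of members of `B` containing `e`. -/
noncomputable def charge (B : Finset (G.E → ZMod 2)) (e : G.E) : ℕ :=
  (B.filter fun x => x e ≠ 0).card

/-- `B` is a basis of the cycle space of `G`. -/
def IsCycleBasis (B : Finset (G.E → ZMod 2)) : Prop :=
  (∀ x ∈ B, x ∈ G.cycleSpace) ∧
    LinearIndependent (ZMod 2) (fun x : B => (x : G.E → ZMod 2)) ∧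
    Submodule.span (ZMod 2) (B : Set (G.E → ZMod 2)) = G.cycleSpace

/-- `B` is a `k`-basis: a basis of the cycle space in which every edge has charge at most `k`. -/
def IsKBasis (k : ℕ) (B : Finset (G.E → ZMod 2)) : Prop :=
  G.IsCycleBasis B ∧ ∀ e : G.E, G.charge B e ≤ k

/-- The basis number of `G`: the least `k` such that `G` has a `k`-basis. -/
noncomputable def basisNum : ℕ := sInf {k | ∃ B, G.IsKBasis k B}

/-- Adjacency of two vertices. -/
def Adj (a b : G.V) : Prop :=
  ∃ e : G.E, (G.fst e = a ∧ G.snd e = b) ∨ (G.fst e = b ∧ G.snd e = a)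

/-- Connectivity. -/
def Connected : Prop :=
  Nonempty G.V ∧ ∀ a b : G.V, Relation.ReflTransGen G.Adj a b

/-- Degree of a vertex (a loop counts twice). -/
noncomputable def degree (v : G.V) : ℕ :=
  ∑ e : G.E, ((if G.fst e = v then 1 else 0) + (if G.snd e = v then 1 else 0))

/-- The subgraph with the same vertex set and edge set restricted to `S`. -/
noncomputable def edgeRestrict (S : Set G.E) : Multigraph where
  V := G.V
  E := S
  fintV := G.fintV
  fintE := (Set.toFinite S).fintype
  fst := fun e => G.fst e.1
  snd := fun e => G.snd e.1

/-- Deletion of a vertex (and all edges incident with it). -/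
noncomputable def deleteVertex (v : G.V) : Multigraph where
  V := {u : G.V // u ≠ v}
  E := {e : G.E // G.fst e ≠ v ∧ G.snd e ≠ v}
  fintV := by classical exact inferInstance
  fintE := by classical exact inferInstance
  fst := fun e => ⟨G.fst e.1, e.2.1⟩
  snd := fun e => ⟨G.snd e.1, e.2.2⟩

/-- `G` is 2-connected: at least 3 vertices, connected, and no cutvertex. -/
def TwoConnected : Prop :=
  G.Connected ∧ 3 ≤ Nat.card G.V ∧ ∀ v : G.V, (G.deleteVertex v).Connected

/-- A cycle of length `n` in `G`: `n` distinct vertices and `n` distinct edges, with edge `i`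
joining vertex `i` to vertex `i+1` (cyclically). -/
def IsCycleOn (n : ℕ) (vs : Fin n → G.V) (es : Fin n → G.E) : Prop :=
  Function.Injective vs ∧ Function.Injective es ∧
    ∀ i : Fin n,
      (G.fst (es i) = vs i ∧ G.snd (es i) = vs (finRotate n i)) ∨
      (G.fst (es i) = vs (finRotate n i) ∧ G.snd (es i) = vs i)

/-- A path with `n` edges, given by its (distinct) vertices and its edges. -/
def IsPathOn (n : ℕ) (vs : Fin (n + 1) → G.V) (es : Fin n → G.E) : Prop :=
  Function.Injective vs ∧
    ∀ i : Fin n,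
      (G.fst (es i) = vs i.castSucc ∧ G.snd (es i) = vs i.succ) ∨
      (G.fst (es i) = vs i.succ ∧ G.snd (es i) = vs i.castSucc)

/-- `p` is the characteristic vector of (the edge set of) a path from `s` to `t`. -/
def IsPathVec (s t : G.V) (p : G.E → ZMod 2) : Prop :=
  ∃ (n : ℕ) (vs : Fin (n + 1) → G.V) (es : Fin n → G.E),
    G.IsPathOn n vs es ∧ vs 0 = s ∧ vs (Fin.last n) = t ∧
      ∀ f : G.E, p f ≠ 0 ↔ ∃ i, es i = f

/-- Two edges lie in a common block: they are equal, or they lie on a common cycle. -/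
def BlockRel (e f : G.E) : Prop :=
  e = f ∨ ∃ (n : ℕ) (vs : Fin n → G.V) (es : Fin n → G.E),
    1 ≤ n ∧ G.IsCycleOn n vs es ∧ (∃ i, es i = e) ∧ (∃ j, es j = f)

/-- `T` is a spanning tree of `G` (as an edge set): the spanning subgraph with edge set `T`
is connected and has no cycles. -/
def IsSpanningTree (T : Set G.E) : Prop :=
  (G.edgeRestrict T).Connected ∧
    ∀ (n : ℕ) (vs : Fin n → (G.edgeRestrict T).V) (es : Fin n → (G.edgeRestrict T).E),
      (G.edgeRestrict T).IsCycleOn n vs es → n = 0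

/-- Contraction of the edge `e`: identify its two endpoints and delete `e`. -/
noncomputable def contract (e : G.E) : Multigraph where
  V := Quot (fun a b : G.V => a = G.fst e ∧ b = G.snd e)
  E := {f : G.E // f ≠ e}
  fintV := quotFintype _
  fintE := by classical exact inferInstance
  fst := fun f => Quot.mk _ (G.fst f.1)
  snd := fun f => Quot.mk _ (G.snd f.1)

/-- Addition of a (possibly parallel) edge joining `u` and `v`. -/
noncomputable def addEdge (u v : G.V) : Multigraph where
  V := G.V
  E := Option G.E
  fintV := G.fintV
  fintE := inferInstance
  fst := fun o => o.elim u G.fst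
  snd := fun o => o.elim v G.snd

/-- Subdivision of the edge `e`: delete `e` and add a new vertex (`none`) joined to both
endpoints of `e`. -/
noncomputable def subdivide (e : G.E) : Multigraph where
  V := Option G.V
  E := {f : G.E // f ≠ e} ⊕ Bool
  fintV := inferInstance
  fintE := by classical exact inferInstance
  fst := Sum.elim (fun f => some (G.fst f.1))
    (fun b => cond b (some (G.fst e)) (some (G.snd e)))
  snd := Sum.elim (fun f => some (G.snd f.1)) (fun _ => none)

/-- Replacement of the edge `e` of `G` by the graph `H` with terminals `s`, `t`:
delete `e`, take the disjoint union with `H`, and identify the endpoints of `e`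
with the terminals. -/
noncomputable def replaceEdge (e : G.E) (H : Multigraph) (s t : H.V) : Multigraph where
  V := Quot (fun a b : G.V ⊕ H.V =>
        (a = Sum.inl (G.fst e) ∧ b = Sum.inr s) ∨ (a = Sum.inl (G.snd e) ∧ b = Sum.inr t))
  E := {f : G.E // f ≠ e} ⊕ H.E
  fintV := quotFintype _
  fintE := by classical exact inferInstance
  fst := Sum.elim (fun f => Quot.mk _ (Sum.inl (G.fst f.1)))
    (fun f => Quot.mk _ (Sum.inr (H.fst f)))
  snd := Sum.elim (fun f => Quot.mk _ (Sum.inl (G.snd f.1)))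
    (fun f => Quot.mk _ (Sum.inr (H.snd f)))

/-! ### Combinatorial embeddings (rotation systems) and planarity -/

/-- Darts: each edge gives two darts. -/
def Dart : Type := G.E × Bool

noncomputable instance : Fintype G.Dart := inferInstanceAs (Fintype (G.E × Bool))

/-- The vertex at which a dart is based. -/
def dartVertex (d : G.Dart) : G.V := cond d.2 (G.fst d.1) (G.snd d.1)

/-- The involution exchanging the two darts of each edge. -/
def dartFlip : Equiv.Perm G.Dart where
  toFun d := (d.1, !d.2)
  invFun d := (d.1, !d.2)
  left_inv := fun d => by cases d; simp; rfl
  right_inv := fun d => by cases d; simp; rfl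

/-- `σ` is a rotation system: its orbits are exactly the sets of darts based at a
common vertex. -/
def IsRotation (σ : Equiv.Perm G.Dart) : Prop :=
  ∀ d d' : G.Dart, σ.SameCycle d d' ↔ G.dartVertex d = G.dartVertex d'

/-- The face permutation of a rotation system. -/
def facePerm (σ : Equiv.Perm G.Dart) : Equiv.Perm G.Dart := G.dartFlip.trans σ

/-- The faces of the embedding given by `σ`: orbits of the face permutation. -/
def Faces (σ : Equiv.Perm G.Dart) : Type := Quot (G.facePerm σ).SameCycle

/-- The face containing a given dart. -/
def faceOf (σ : Equiv.Perm G.Dart) (d : G.Dart) : G.Faces σ := Quot.mk _ d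

noncomputable def numFaces (σ : Equiv.Perm G.Dart) : ℕ := Nat.card (G.Faces σ)

noncomputable def numComponents : ℕ := Nat.card (Quot G.Adj)

/-- The number of connected components containing at least one edge. -/
noncomputable def numEdgedComponents : ℕ :=
  Nat.card {c : Quot G.Adj // ∃ e : G.E, Quot.mk G.Adj (G.fst e) = c}

/-- `σ` is a planar (genus zero) embedding, by Euler's formula
(componentwise `V - E + F = 2`, where components without edges contribute one global face). -/
def IsPlanarRotation (σ : Equiv.Perm G.Dart) : Prop :=
  G.IsRotation σ ∧
    G.numFaces σ + Nat.card G.V = Nat.card G.E + G.numComponents + G.numEdgedComponents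

/-- `G` is planar: it admits a genus-zero combinatorial embedding. -/
def IsPlanar : Prop := ∃ σ : Equiv.Perm G.Dart, G.IsPlanarRotation σ

/-- The boundary of a face, as an element of `F_2^E`: the edges having exactly one of
their two darts on the face. -/
noncomputable def faceBoundary (σ : Equiv.Perm G.Dart) (c : G.Faces σ) : G.E → ZMod 2 :=
  fun e => ∑ b : Bool, if G.faceOf σ (e, b) = c then 1 else 0

/-- The vertex `v` lies on the face `c`. -/
def VertexOnFace (σ : Equiv.Perm G.Dart) (v : G.V) (c : G.Faces σ) : Prop :=
  ∃ d : G.Dart, G.faceOf σ d = c ∧ G.dartVertex d = v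

/-- The edge `e` lies on the face `c`. -/
def EdgeOnFace (σ : Equiv.Perm G.Dart) (e : G.E) (c : G.Faces σ) : Prop :=
  ∃ b : Bool, G.faceOf σ (e, b) = c



lemma zmod2_cases (a : ZMod 2) : a = 0 ∨ a = 1 := by revert a; decide

lemma zmod2_ne_zero {a : ZMod 2} : a ≠ 0 ↔ a = 1 := by revert a; decide

lemma zmod2_add_self (a : ZMod 2) : a + a = 0 := by revert a; decide

variable {G : Multigraph}

/-- The support of a vector, as a finset. -/
noncomputable def suppF (x : G.E → ZMod 2) : Finset G.E :=
  Finset.univ.filter (fun f => x f ≠ 0)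

lemma mem_suppF {x : G.E → ZMod 2} {f : G.E} : f ∈ suppF x ↔ x f ≠ 0 := by
  simp [suppF]

/-- The characteristic vector of the edge set of an indexed family of edges. -/
noncomputable def cycleVec {n : ℕ} (es : Fin n → G.E) : G.E → ZMod 2 :=
  fun f => if ∃ i, es i = f then 1 else 0

/-- `x` is the characteristic vector of (the edge set of) a cycle. -/
def IsCircuit (G : Multigraph) (x : G.E → ZMod 2) : Prop :=
  ∃ (n : ℕ) (vs : Fin n → G.V) (es : Fin n → G.E),
    1 ≤ n ∧ G.IsCycleOn n vs es ∧ ∀ f, x f ≠ 0 ↔ ∃ i, es i = f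

lemma isCircuit_cycleVec {n : ℕ} {vs : Fin n → G.V} {es : Fin n → G.E}
    (hn : 1 ≤ n) (hc : G.IsCycleOn n vs es) : G.IsCircuit (cycleVec es) := by
  refine ⟨n, vs, es, hn, hc, fun f => ?_⟩
  unfold cycleVec
  split <;> simp_all

lemma inc_eq_ind {v : G.V} {e : G.E} {a b : G.V}
    (h : (G.fst e = a ∧ G.snd e = b) ∨ (G.fst e = b ∧ G.snd e = a)) :
    G.inc v e = (if a = v then 1 else 0) + (if b = v then 1 else 0) := by
  rcases h with ⟨h1, h2⟩ | ⟨h1, h2⟩ <;> rw [inc, h1, h2]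
  exact add_comm _ _

/-- Circuits lie in the cycle space. -/
lemma IsCircuit.mem_cycleSpace {x : G.E → ZMod 2} (hx : G.IsCircuit x) :
    x ∈ G.cycleSpace := by
  obtain ⟨n, vs, es, hn, ⟨hvs, hes, hjoin⟩, hsupp⟩ := hx
  intro v
  have hx1 : ∀ f, x f = if ∃ i, es i = f then 1 else 0 := by
    intro f
    split
    · exact zmod2_ne_zero.1 ((hsupp f).2 ‹_›)
    · by_contra h
      exact ‹¬∃ i, es i = f› ((hsupp f).1 fun h0 => h (h0 ▸ rfl))
  calc ∑ e : G.E, G.inc v e * x e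
      = ∑ e ∈ Finset.image es Finset.univ, G.inc v e := by
        rw [← Finset.filter_univ_mem (Finset.image es Finset.univ), Finset.sum_filter]
        apply Finset.sum_congr rfl
        intro e _
        rw [hx1 e]
        by_cases h : ∃ i, es i = e
        · rw [if_pos h, mul_one, if_pos (by simpa using h)]
        · rw [if_neg h, mul_zero, if_neg (by simpa using h)]
    _ = ∑ i : Fin n, G.inc v (es i) := by
        rw [Finset.sum_image (fun a _ b _ h => hes h)]
    _ = (∑ i : Fin n, if vs i = v then (1 : ZMod 2) else 0)
        + ∑ i : Fin n, if vs (finRotate n i) = v then (1 : ZMod 2) else 0 := by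
        rw [← Finset.sum_add_distrib]
        exact Finset.sum_congr rfl fun i _ => inc_eq_ind (hjoin i)
    _ = 0 := by
        rw [show (∑ i : Fin n, if vs (finRotate n i) = v then (1 : ZMod 2) else 0)
            = ∑ i : Fin n, if vs i = v then (1 : ZMod 2) else 0 from
          Equiv.sum_comp (finRotate n) (fun i => if vs i = v then (1 : ZMod 2) else 0)]
        exact zmod2_add_self _

/-- Circuits are nonzero. -/
lemma IsCircuit.ne_zero {x : G.E → ZMod 2} (hx : G.IsCircuit x) : x ≠ 0 := by
  obtain ⟨n, vs, es, hn, hc, hsupp⟩ := hx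
  intro h0
  have : x (es ⟨0, hn⟩) ≠ 0 := (hsupp _).2 ⟨_, rfl⟩
  rw [h0] at this
  exact this rfl


lemma sum_inc_mul_eq {y : G.E → ZMod 2} {n : ℕ} {es : Fin n → G.E}
    (hes : Function.Injective es)
    (hsub : ∀ f, y f ≠ 0 → ∃ i, es i = f) (v : G.V) :
    ∑ e : G.E, G.inc v e * y e = ∑ i : Fin n, G.inc v (es i) * y (es i) := by
  have himg := Finset.sum_image (s := Finset.univ) (g := es)
    (f := fun e => G.inc v e * y e) (fun a _ b _ h => hes h)
  rw [← himg]
  symm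
  apply Finset.sum_subset (Finset.subset_univ _)
  intro e _ he
  have : y e = 0 := by
    by_contra h
    obtain ⟨i, hi⟩ := hsub e h
    exact he (Finset.mem_image.2 ⟨i, Finset.mem_univ _, hi⟩)
  rw [this, mul_zero]

open Fin.NatCast in
/-- Circuits are support-minimal in the cycle space. -/
lemma IsCircuit.eq_of_subset {x y : G.E → ZMod 2} (hx : G.IsCircuit x)
    (hy : y ∈ G.cycleSpace) (hsub : ∀ f, y f ≠ 0 → x f ≠ 0) : y = 0 ∨ y = x := by
  obtain ⟨n, vs, es, hn, ⟨hvs, hes, hjoin⟩, hsupp⟩ := hx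
  by_cases hy0 : y = 0
  · exact Or.inl hy0
  right
  obtain ⟨m, rfl⟩ : ∃ m, n = m + 1 := ⟨n - 1, (Nat.succ_pred_eq_of_pos hn).symm⟩
  set I : Finset (Fin (m + 1)) := Finset.univ.filter (fun i => y (es i) ≠ 0) with hI
  have hInonempty : I.Nonempty := by
    obtain ⟨f, hf⟩ := Function.ne_iff.1 hy0
    obtain ⟨i, hi⟩ := (hsupp f).1 (hsub f (by simpa using hf))
    exact ⟨i, Finset.mem_filter.2 ⟨Finset.mem_univ _, hi ▸ (by simpa using hf)⟩⟩
  have hysub : ∀ f, y f ≠ 0 → ∃ i, es i = f := fun f hf => (hsupp f).1 (hsub f hf)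
  have hclosed : ∀ i ∈ I, finRotate (m + 1) i ∈ I := by
    intro i hiI
    by_contra hni
    have h0 := hy (vs (finRotate (m + 1) i))
    rw [sum_inc_mul_eq hes hysub] at h0
    set v := vs (finRotate (m + 1) i) with hv
    have hterm : ∀ j : Fin (m + 1), G.inc v (es j) * y (es j) =
        (if j = finRotate (m + 1) i then y (es j) else 0)
        + (if j = i then y (es j) else 0) := by
      intro j
      rw [inc_eq_ind (hjoin j), hv, add_mul]
      congr 1
      · by_cases h : j = finRotate (m + 1) i
        · rw [if_pos (hvs.eq_iff.2 h), if_pos h, one_mul]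
        · rw [if_neg (fun hh => h (hvs hh)), if_neg h, zero_mul]
      · by_cases h : j = i
        · rw [if_pos (hvs.eq_iff.2 (by rw [h])), if_pos h, one_mul]
        · rw [if_neg (fun hh => h ((finRotate (m+1)).injective (hvs hh))), if_neg h, zero_mul]
    rw [Finset.sum_congr rfl (fun j _ => hterm j), Finset.sum_add_distrib,
      Finset.sum_ite_eq' Finset.univ, Finset.sum_ite_eq' Finset.univ,
      if_pos (Finset.mem_univ _), if_pos (Finset.mem_univ _)] at h0
    have h1 : y (es (finRotate (m + 1) i)) = 0 := by
      by_contra h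
      exact hni (Finset.mem_filter.2 ⟨Finset.mem_univ _, h⟩)
    have h2 : y (es i) = 1 := zmod2_ne_zero.1 (Finset.mem_filter.1 hiI).2
    rw [h1, h2, zero_add] at h0
    exact one_ne_zero h0
  have hIuniv : I = Finset.univ := by
    obtain ⟨i₀, hi₀⟩ := hInonempty
    have hk : ∀ k : ℕ, i₀ + (k : Fin (m + 1)) ∈ I := by
      intro k
      induction k with
      | zero => simpa using hi₀
      | succ k ih =>
          have : i₀ + ((k + 1 : ℕ) : Fin (m + 1)) = finRotate (m + 1) (i₀ + (k : ℕ)) := by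
            rw [finRotate_succ_apply]
            push_cast
            abel
          rw [this]
          exact hclosed _ ih
    apply Finset.eq_univ_of_forall
    intro j
    have := hk (j - i₀).val
    rwa [Fin.cast_val_eq_self, add_sub_cancel] at this
  funext f
  by_cases hxf : x f ≠ 0
  · obtain ⟨i, hi⟩ := (hsupp f).1 hxf
    have hiI : i ∈ I := hIuniv ▸ Finset.mem_univ i
    have : y f ≠ 0 := hi ▸ (Finset.mem_filter.1 hiI).2
    rw [zmod2_ne_zero.1 this, zmod2_ne_zero.1 hxf]
  · push_neg at hxf
    rw [hxf]
    by_contra h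
    exact (hsub f h) hxf


lemma inc_eq_one_iff {v : G.V} {e : G.E} :
    G.inc v e = 1 ↔ ((G.fst e = v ∧ G.snd e ≠ v) ∨ (G.snd e = v ∧ G.fst e ≠ v)) := by
  unfold inc
  by_cases h1 : G.fst e = v <;> by_cases h2 : G.snd e = v <;> simp [h1, h2] <;> decide

lemma parity_card {x : G.E → ZMod 2} (hx : x ∈ G.cycleSpace) (v : G.V) :
    (((Finset.univ.filter (fun e => x e ≠ 0 ∧ G.inc v e = 1)).card : ZMod 2)) = 0 := by
  calc ((Finset.univ.filter (fun e => x e ≠ 0 ∧ G.inc v e = 1)).card : ZMod 2)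
      = ∑ e : G.E, if x e ≠ 0 ∧ G.inc v e = 1 then 1 else 0 := (Finset.sum_boole _ _).symm
    _ = ∑ e : G.E, G.inc v e * x e := Finset.sum_congr rfl (fun e _ => by
        rcases zmod2_cases (x e) with h | h <;> rcases zmod2_cases (G.inc v e) with h2 | h2 <;>
          simp [h, h2])
    _ = 0 := hx v

lemma exists_other_edge {x : G.E → ZMod 2} (hx : x ∈ G.cycleSpace) {e : G.E} {v : G.V}
    (he : x e ≠ 0) (hv : G.inc v e = 1) :
    ∃ e', e' ≠ e ∧ x e' ≠ 0 ∧ G.inc v e' = 1 := by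
  classical
  set S := Finset.univ.filter (fun e => x e ≠ 0 ∧ G.inc v e = 1) with hS
  have heS : e ∈ S := Finset.mem_filter.2 ⟨Finset.mem_univ _, he, hv⟩
  have hdvd : 2 ∣ S.card := (ZMod.natCast_eq_zero_iff _ 2).1 (parity_card hx v)
  have hpos : 0 < S.card := Finset.card_pos.2 ⟨e, heS⟩
  have h1 : 1 < S.card := by omega
  obtain ⟨e', he', hne⟩ := Finset.exists_mem_ne h1 e
  exact ⟨e', hne, (Finset.mem_filter.1 he').2⟩

/-- The endpoint of `e` other than `v`. -/
noncomputable def otherEnd (G : Multigraph) (e : G.E) (v : G.V) : G.V :=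
  if G.fst e = v then G.snd e else G.fst e

lemma otherEnd_join {e : G.E} {v : G.V} (h : G.inc v e = 1) :
    (G.fst e = v ∧ G.snd e = G.otherEnd e v) ∨
      (G.fst e = G.otherEnd e v ∧ G.snd e = v) := by
  rcases inc_eq_one_iff.1 h with ⟨h1, h2⟩ | ⟨h1, h2⟩
  · exact Or.inl ⟨h1, by rw [otherEnd, if_pos h1]⟩
  · exact Or.inr ⟨by rw [otherEnd, if_neg h2], h1⟩

lemma otherEnd_inc {e : G.E} {v : G.V} (h : G.inc v e = 1) :
    G.inc (G.otherEnd e v) e = 1 := by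
  rcases inc_eq_one_iff.1 h with ⟨h1, h2⟩ | ⟨h1, h2⟩
  · rw [otherEnd, if_pos h1]
    exact inc_eq_one_iff.2 (Or.inr ⟨rfl, fun hh => h2 (hh.symm.trans h1)⟩)
  · rw [otherEnd, if_neg h2]
    exact inc_eq_one_iff.2 (Or.inl ⟨rfl, fun hh => h2 (hh.symm.trans h1)⟩)

/-- One step of a non-backtracking walk through the support of `x`. -/
private noncomputable def walkStep {G : Multigraph} (x : G.E → ZMod 2)
    (hx : x ∈ G.cycleSpace) (st : {p : G.E × G.V // x p.1 ≠ 0 ∧ G.inc p.2 p.1 = 1}) :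
    {p : G.E × G.V // x p.1 ≠ 0 ∧ G.inc p.2 p.1 = 1} :=
  ⟨((exists_other_edge hx st.2.1 st.2.2).choose,
      G.otherEnd (exists_other_edge hx st.2.1 st.2.2).choose st.1.2),
    (exists_other_edge hx st.2.1 st.2.2).choose_spec.2.1,
    otherEnd_inc (exists_other_edge hx st.2.1 st.2.2).choose_spec.2.2⟩

private noncomputable def walk {G : Multigraph} (x : G.E → ZMod 2)
    (hx : x ∈ G.cycleSpace) (st0 : {p : G.E × G.V // x p.1 ≠ 0 ∧ G.inc p.2 p.1 = 1}) :
    ℕ → {p : G.E × G.V // x p.1 ≠ 0 ∧ G.inc p.2 p.1 = 1}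
  | 0 => st0
  | (k + 1) => walkStep x hx (walk x hx st0 k)

private noncomputable def wVert {G : Multigraph} (x : G.E → ZMod 2)
    (hx : x ∈ G.cycleSpace) (st0 : {p : G.E × G.V // x p.1 ≠ 0 ∧ G.inc p.2 p.1 = 1})
    (v0 : G.V) : ℕ → G.V
  | 0 => v0
  | (k + 1) => (walk x hx st0 k).1.2

private lemma walk_edge_ne {G : Multigraph} {x : G.E → ZMod 2}
    (hx : x ∈ G.cycleSpace) (st0) (k : ℕ) :
    (walk x hx st0 (k + 1)).1.1 ≠ (walk x hx st0 k).1.1 :=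
  (exists_other_edge hx (walk x hx st0 k).2.1 (walk x hx st0 k).2.2).choose_spec.1

private lemma walk_inc_prev {G : Multigraph} {x : G.E → ZMod 2}
    (hx : x ∈ G.cycleSpace) (st0) (k : ℕ) :
    G.inc ((walk x hx st0 k).1.2) ((walk x hx st0 (k + 1)).1.1) = 1 :=
  (exists_other_edge hx (walk x hx st0 k).2.1 (walk x hx st0 k).2.2).choose_spec.2.2

private lemma walk_head {G : Multigraph} {x : G.E → ZMod 2}
    (hx : x ∈ G.cycleSpace) (st0) (k : ℕ) :
    (walk x hx st0 (k + 1)).1.2 =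
      G.otherEnd ((walk x hx st0 (k + 1)).1.1) ((walk x hx st0 k).1.2) := rfl

private lemma walk_join {G : Multigraph} {x : G.E → ZMod 2}
    (hx : x ∈ G.cycleSpace) (st0) (v0 : G.V)
    (hbase : (G.fst st0.1.1 = v0 ∧ G.snd st0.1.1 = st0.1.2) ∨
      (G.fst st0.1.1 = st0.1.2 ∧ G.snd st0.1.1 = v0)) (k : ℕ) :
    (G.fst ((walk x hx st0 k).1.1) = wVert x hx st0 v0 k ∧
        G.snd ((walk x hx st0 k).1.1) = wVert x hx st0 v0 (k + 1)) ∨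
      (G.fst ((walk x hx st0 k).1.1) = wVert x hx st0 v0 (k + 1) ∧
        G.snd ((walk x hx st0 k).1.1) = wVert x hx st0 v0 k) := by
  cases k with
  | zero =>
      rcases hbase with ⟨h1, h2⟩ | ⟨h1, h2⟩
      · exact Or.inl ⟨h1, h2⟩
      · exact Or.inr ⟨h1, h2⟩
  | succ k =>
      have h1 := walk_inc_prev hx st0 k
      have h2 := walk_head hx st0 k
      rcases otherEnd_join h1 with ⟨ha, hb⟩ | ⟨ha, hb⟩
      · exact Or.inl ⟨ha, by rw [hb, ← h2]; rfl⟩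
      · exact Or.inr ⟨by rw [ha, ← h2]; rfl, hb⟩

private lemma walk_vert_ne {G : Multigraph} {x : G.E → ZMod 2}
    (hx : x ∈ G.cycleSpace) (st0) (v0 : G.V)
    (hbase : (G.fst st0.1.1 = v0 ∧ G.snd st0.1.1 = st0.1.2) ∨
      (G.fst st0.1.1 = st0.1.2 ∧ G.snd st0.1.1 = v0)) (k : ℕ) :
    wVert x hx st0 v0 (k + 1) ≠ wVert x hx st0 v0 k := by
  intro keq
  have hinck : G.inc (wVert x hx st0 v0 (k + 1)) ((walk x hx st0 k).1.1) = 1 :=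
    (walk x hx st0 k).2.2
  rcases inc_eq_one_iff.1 hinck with ⟨h1, h2⟩ | ⟨h1, h2⟩ <;>
    rcases walk_join hx st0 v0 hbase k with ⟨g1, g2⟩ | ⟨g1, g2⟩
  · exact h2 g2
  · exact h2 (g2.trans keq.symm)
  · exact h2 (g1.trans keq.symm)
  · exact h2 g1


/-- Every nonzero element of the cycle space contains a circuit in its support. -/
lemma exists_circuit_le {x : G.E → ZMod 2} (hx : x ∈ G.cycleSpace) (hx0 : x ≠ 0) :
    ∃ c, G.IsCircuit c ∧ ∀ f, c f ≠ 0 → x f ≠ 0 := by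
  obtain ⟨f₀, hf₀⟩ : ∃ f, x f ≠ 0 := by
    by_contra h
    push_neg at h
    exact hx0 (funext fun f => h f)
  by_cases hloop : ∃ e, x e ≠ 0 ∧ G.fst e = G.snd e
  · obtain ⟨e, he, hl⟩ := hloop
    have hcyc : G.IsCycleOn 1 (fun _ => G.fst e) (fun _ => e) :=
      ⟨fun a b _ => Subsingleton.elim a b, fun a b _ => Subsingleton.elim a b,
        fun _ => Or.inl ⟨rfl, hl.symm⟩⟩
    refine ⟨cycleVec (fun _ : Fin 1 => e), isCircuit_cycleVec (le_refl 1) hcyc, ?_⟩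
    intro f hf
    rw [cycleVec] at hf
    by_cases hef : ∃ i : Fin 1, (fun _ : Fin 1 => e) i = f
    · obtain ⟨i, hi⟩ := hef
      have : e = f := hi
      exact this ▸ he
    · rw [if_neg hef] at hf
      exact absurd rfl hf
  · push_neg at hloop
    have hinc0 : G.inc (G.snd f₀) f₀ = 1 :=
      inc_eq_one_iff.2 (Or.inr ⟨rfl, hloop f₀ hf₀⟩)
    set st0 : {p : G.E × G.V // x p.1 ≠ 0 ∧ G.inc p.2 p.1 = 1} :=
      ⟨(f₀, G.snd f₀), hf₀, hinc0⟩ with hst0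
    have hbase : (G.fst st0.1.1 = G.fst f₀ ∧ G.snd st0.1.1 = st0.1.2) ∨
        (G.fst st0.1.1 = st0.1.2 ∧ G.snd st0.1.1 = G.fst f₀) := Or.inl ⟨rfl, rfl⟩
    set w : ℕ → G.V := wVert x hx st0 (G.fst f₀) with hwdef
    set edge : ℕ → G.E := fun k => (walk x hx st0 k).1.1 with hedgedef
    have hxe : ∀ k, x (edge k) ≠ 0 := fun k => (walk x hx st0 k).2.1
    have hjoinw : ∀ k, (G.fst (edge k) = w k ∧ G.snd (edge k) = w (k + 1)) ∨
        (G.fst (edge k) = w (k + 1) ∧ G.snd (edge k) = w k) :=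
      fun k => walk_join hx st0 (G.fst f₀) hbase k
    have hwne : ∀ k, w (k + 1) ≠ w k := fun k => walk_vert_ne hx st0 (G.fst f₀) hbase k
    have hedgene : ∀ k, edge (k + 1) ≠ edge k := fun k => walk_edge_ne hx st0 k
    -- pigeonhole: find a repeated vertex
    have hex : ∃ b, ∃ a, a < b ∧ w a = w b := by
      obtain ⟨i, j, hij, hwij⟩ := Fintype.exists_ne_map_eq_of_card_lt
        (fun i : Fin (Fintype.card G.V + 1) => w i.val) (by simp)
      rcases Nat.lt_or_ge i.val j.val with h | h
      · exact ⟨j.val, i.val, h, hwij⟩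
      · have hne : i.val ≠ j.val := fun hh => hij (Fin.ext hh)
        exact ⟨i.val, j.val, by omega, hwij.symm⟩
    set b := Nat.find hex with hbdef
    obtain ⟨a, hab, hwab⟩ := Nat.find_spec hex
    rw [← hbdef] at hab hwab
    have hmin : ∀ c d, c < d → d < b → w c ≠ w d := by
      intro c d hcd hdb hwcd
      exact Nat.find_min hex hdb ⟨c, hcd, hwcd⟩
    have hL2 : 2 ≤ b - a := by
      rcases Nat.lt_or_ge (b - a) 2 with h | h
      · exfalso
        have hb1 : b = a + 1 := by omega
        rw [hb1] at hwab
        exact hwne a hwab.symm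
      · exact h
    obtain ⟨m, hm⟩ : ∃ m, b - a = m + 2 := ⟨b - a - 2, by omega⟩
    have hb : b = a + (m + 2) := by omega
    -- the cycle
    set vfin : Fin (m + 2) → G.V := fun i => w (a + i.val) with hvfin
    set efin : Fin (m + 2) → G.E := fun i => edge (a + i.val) with hefin
    have hvaladd : ∀ i : Fin (m + 2), ((i + 1 : Fin (m + 2))).val = (i.val + 1) % (m + 2) := by
      intro i
      rw [Fin.val_add, Fin.val_one]
    have hnext : ∀ i : Fin (m + 2), w (a + i.val + 1) = vfin (i + 1) := by
      intro i
      show w (a + i.val + 1) = w (a + ((i + 1 : Fin (m + 2))).val)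
      rw [hvaladd i]
      rcases Nat.lt_or_ge (i.val + 1) (m + 2) with h | h
      · rw [Nat.mod_eq_of_lt h, Nat.add_assoc]
      · have hiv : i.val + 1 = m + 2 := by have := i.isLt; omega
        rw [hiv, Nat.mod_self]
        have hab' : a + i.val + 1 = b := by omega
        rw [hab', Nat.add_zero]
        exact hwab.symm
    have hvinj : Function.Injective vfin := by
      intro i j hij
      by_contra hne
      have hia : a + i.val < b := by have := i.isLt; omega
      have hja : a + j.val < b := by have := j.isLt; omega
      have hvne : i.val ≠ j.val := fun hh => hne (Fin.ext hh)
      rcases Nat.lt_or_ge (a + i.val) (a + j.val) with h | h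
      · exact hmin _ _ h hja hij
      · exact hmin _ _ (by omega) hia hij.symm
    have hjoinfin : ∀ i : Fin (m + 2),
        (G.fst (efin i) = vfin i ∧ G.snd (efin i) = vfin (i + 1)) ∨
          (G.fst (efin i) = vfin (i + 1) ∧ G.snd (efin i) = vfin i) := by
      intro i
      have h := hjoinw (a + i.val)
      rw [hnext i] at h
      exact h
    have heinj : Function.Injective efin := by
      intro i j hij
      by_contra hne
      have key : (vfin i = vfin j ∧ vfin (i + 1) = vfin (j + 1)) ∨
          (vfin i = vfin (j + 1) ∧ vfin (i + 1) = vfin j) := by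
        rcases hjoinfin i with ⟨a1, a2⟩ | ⟨a1, a2⟩ <;>
          rcases hjoinfin j with ⟨b1, b2⟩ | ⟨b1, b2⟩
        · exact Or.inl ⟨a1.symm.trans (by rw [hij, b1]), a2.symm.trans (by rw [hij, b2])⟩
        · exact Or.inr ⟨a1.symm.trans (by rw [hij, b1]), a2.symm.trans (by rw [hij, b2])⟩
        · exact Or.inr ⟨a2.symm.trans (by rw [hij, b2]), a1.symm.trans (by rw [hij, b1])⟩
        · exact Or.inl ⟨a2.symm.trans (by rw [hij, b2]), a1.symm.trans (by rw [hij, b1])⟩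
      rcases key with ⟨k1, _⟩ | ⟨k1, k2⟩
      · exact hne (hvinj k1)
      · have e1 : i = j + 1 := hvinj k1
        have e2 : i + 1 = j := hvinj k2
        have hv1 : i.val = (j.val + 1) % (m + 2) :=
          (congrArg Fin.val e1).trans (hvaladd j)
        have hv2 : j.val = (i.val + 1) % (m + 2) :=
          (congrArg Fin.val e2.symm).trans (hvaladd i)
        have hije : edge (a + i.val) = edge (a + j.val) := hij
        have hvne : i.val ≠ j.val := fun hh => hne (Fin.ext hh)
        rcases Nat.lt_or_ge (j.val + 1) (m + 2) with h | h
        · rw [Nat.mod_eq_of_lt h] at hv1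
          rcases Nat.lt_or_ge (i.val + 1) (m + 2) with h' | h'
          · rw [Nat.mod_eq_of_lt h'] at hv2
            omega
          · have hiv : i.val + 1 = m + 2 := by have := i.isLt; omega
            rw [hiv, Nat.mod_self] at hv2
            have hi1 : i.val = 1 := by omega
            have hj0 : j.val = 0 := hv2
            rw [hi1, hj0, Nat.add_zero] at hije
            exact hedgene a hije
        · have hjv : j.val + 1 = m + 2 := by have := j.isLt; omega
          rw [hjv, Nat.mod_self] at hv1
          have hi0 : i.val = 0 := hv1
          have h1lt : i.val + 1 < m + 2 := by omega
          rw [Nat.mod_eq_of_lt h1lt] at hv2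
          have hj1 : j.val = 1 := by omega
          rw [hi0, hj1, Nat.add_zero] at hije
          exact hedgene a hije.symm
    have hcyc : G.IsCycleOn (m + 2) vfin efin := by
      refine ⟨hvinj, heinj, ?_⟩
      intro i
      rw [finRotate_succ_apply]
      exact hjoinfin i
    refine ⟨cycleVec efin, isCircuit_cycleVec (by omega) hcyc, ?_⟩
    intro f hf
    rw [cycleVec] at hf
    by_cases hef : ∃ i : Fin (m + 2), efin i = f
    · obtain ⟨i, hi⟩ := hef
      rw [← hi]
      exact hxe (a + i.val)
    · rw [if_neg hef] at hf
      exact absurd rfl hf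


lemma supp_add_circuit {x c : G.E → ZMod 2} (hc : G.IsCircuit c)
    (hsub : ∀ f, c f ≠ 0 → x f ≠ 0) :
    (∀ p, (x + c) p ≠ 0 → x p ≠ 0 ∧ c p = 0) ∧ suppF (x + c) ⊂ suppF x := by
  have key : ∀ p, (x + c) p ≠ 0 → x p ≠ 0 ∧ c p = 0 := by
    intro p hp
    rcases zmod2_cases (c p) with h | h
    · refine ⟨fun hxp => hp ?_, h⟩
      show x p + c p = 0
      rw [hxp, h, add_zero]
    · exfalso
      apply hp
      show x p + c p = 0
      rw [zmod2_ne_zero.1 (hsub p (by rw [h]; exact one_ne_zero)), h]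
      exact zmod2_add_self 1
  refine ⟨key, ?_, ?_⟩
  · intro p hp
    exact mem_suppF.2 (key p (mem_suppF.1 hp)).1
  · intro hsup
    obtain ⟨q, hq⟩ : ∃ q, c q ≠ 0 := by
      by_contra h
      push_neg at h
      exact hc.ne_zero (funext fun q => h q)
    have hq1 : q ∈ suppF x := mem_suppF.2 (hsub q hq)
    have hq2 : q ∈ suppF (x + c) := hsup hq1
    have : (x + c) q = 0 := by
      show x q + c q = 0
      rw [zmod2_ne_zero.1 (hsub q hq), zmod2_ne_zero.1 hq]
      exact zmod2_add_self 1
    exact mem_suppF.1 hq2 this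

/-- Through every edge of the support of an element of the cycle space there is a circuit
contained in the support. -/
lemma exists_circuit_through {x : G.E → ZMod 2} (hx : x ∈ G.cycleSpace) {f : G.E}
    (hf : x f ≠ 0) : ∃ c, G.IsCircuit c ∧ c f ≠ 0 ∧ ∀ p, c p ≠ 0 → x p ≠ 0 := by
  have haux : ∀ n : ℕ, ∀ x : G.E → ZMod 2, x ∈ G.cycleSpace → (suppF x).card ≤ n →
      ∀ f, x f ≠ 0 → ∃ c, G.IsCircuit c ∧ c f ≠ 0 ∧ ∀ p, c p ≠ 0 → x p ≠ 0 := by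
    intro n
    induction n with
    | zero =>
        intro x _ hcard f hf
        exfalso
        have : f ∈ suppF x := mem_suppF.2 hf
        have := Finset.card_pos.2 ⟨f, this⟩
        omega
    | succ n ih =>
        intro x hx hcard f hf
        have hx0 : x ≠ 0 := fun h => hf (by rw [h]; rfl)
        obtain ⟨c₀, hc₀, hsub⟩ := exists_circuit_le hx hx0
        by_cases hcf : c₀ f = 0
        · obtain ⟨hkey, hss⟩ := supp_add_circuit hc₀ hsub
          have hmem : x + c₀ ∈ G.cycleSpace := G.cycleSpace.add_mem hx hc₀.mem_cycleSpace
          have hcard' : (suppF (x + c₀)).card ≤ n := by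
            have := Finset.card_lt_card hss
            omega
          have hf' : (x + c₀) f ≠ 0 := by
            show x f + c₀ f ≠ 0
            rw [hcf, add_zero]
            exact hf
          obtain ⟨c, hc, hcf', hcsub⟩ := ih (x + c₀) hmem hcard' f hf'
          exact ⟨c, hc, hcf', fun p hp => (hkey p (hcsub p hp)).1⟩
        · exact ⟨c₀, hc₀, hcf, hsub⟩
  exact haux (suppF x).card x hx (le_refl _) f hf

/-- The cycle space is spanned by circuits. -/
lemma cycleSpace_eq_span :
    G.cycleSpace = Submodule.span (ZMod 2) {c : G.E → ZMod 2 | G.IsCircuit c} := by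
  apply le_antisymm
  · intro x hx
    have haux : ∀ n : ℕ, ∀ x : G.E → ZMod 2, x ∈ G.cycleSpace → (suppF x).card ≤ n →
        x ∈ Submodule.span (ZMod 2) {c : G.E → ZMod 2 | G.IsCircuit c} := by
      intro n
      induction n with
      | zero =>
          intro x _ hcard
          have : x = 0 := by
            funext p
            by_contra hp
            have := Finset.card_pos.2 ⟨p, mem_suppF.2 hp⟩
            omega
          rw [this]
          exact Submodule.zero_mem _
      | succ n ih =>
          intro x hx hcard
          by_cases hx0 : x = 0
          · rw [hx0]; exact Submodule.zero_mem _
          obtain ⟨c₀, hc₀, hsub⟩ := exists_circuit_le hx hx0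
          obtain ⟨-, hss⟩ := supp_add_circuit hc₀ hsub
          have hmem : x + c₀ ∈ G.cycleSpace := G.cycleSpace.add_mem hx hc₀.mem_cycleSpace
          have hcard' : (suppF (x + c₀)).card ≤ n := by
            have := Finset.card_lt_card hss
            omega
          have h1 : x + c₀ ∈ Submodule.span (ZMod 2) {c : G.E → ZMod 2 | G.IsCircuit c} :=
            ih (x + c₀) hmem hcard'
          have h2 : c₀ ∈ Submodule.span (ZMod 2) {c : G.E → ZMod 2 | G.IsCircuit c} :=
            Submodule.subset_span hc₀
          have hxeq : x = (x + c₀) + c₀ := by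
            funext p
            show x p = (x p + c₀ p) + c₀ p
            rw [add_assoc, zmod2_add_self, add_zero]
          rw [hxeq]
          exact Submodule.add_mem _ h1 h2
    exact haux (suppF x).card x hx (le_refl _)
  · rw [Submodule.span_le]
    intro c hc
    exact hc.mem_cycleSpace


/-- Two intersecting circuits through `e` and `g` yield a circuit through both `e` and `g`. -/
lemma exists_circuit_both :
    ∀ n : ℕ, ∀ x y : G.E → ZMod 2, G.IsCircuit x → G.IsCircuit y →
      (suppF x ∪ suppF y).card ≤ n →
      ∀ e g : G.E, x e ≠ 0 → y g ≠ 0 → (∃ h, x h ≠ 0 ∧ y h ≠ 0) →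
      ∃ z, G.IsCircuit z ∧ z e ≠ 0 ∧ z g ≠ 0 := by
  intro n
  induction n with
  | zero =>
      intro x y hx hy hcard e g he hg hmeet
      exfalso
      have : e ∈ suppF x ∪ suppF y := Finset.mem_union_left _ (mem_suppF.2 he)
      have := Finset.card_pos.2 ⟨e, this⟩
      omega
  | succ n ih =>
      intro x y hx hy hcard e g he hg hmeet
      by_cases hxg : x g ≠ 0
      · exact ⟨x, hx, he, hxg⟩
      by_cases hye : y e ≠ 0
      · exact ⟨y, hy, hye, hg⟩
      push_neg at hxg hye
      obtain ⟨h, hxh, hyh⟩ := hmeet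
      have hw : x + y ∈ G.cycleSpace :=
        G.cycleSpace.add_mem hx.mem_cycleSpace hy.mem_cycleSpace
      have hwe : (x + y) e ≠ 0 := by
        show x e + y e ≠ 0
        rw [hye, add_zero]
        exact he
      have hwg : (x + y) g ≠ 0 := by
        show x g + y g ≠ 0
        rw [hxg, zero_add]
        exact hg
      have hwh : (x + y) h = 0 := by
        show x h + y h = 0
        rw [zmod2_ne_zero.1 hxh, zmod2_ne_zero.1 hyh]
        exact zmod2_add_self 1
      have hwsub : ∀ p, (x + y) p ≠ 0 → x p ≠ 0 ∨ y p ≠ 0 := by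
        intro p hp
        by_contra hno
        push_neg at hno
        apply hp
        show x p + y p = 0
        rw [hno.1, hno.2, add_zero]
      obtain ⟨c3, hc3, hc3e, hc3sub⟩ := exists_circuit_through hw hwe
      obtain ⟨c4, hc4, hc4g, hc4sub⟩ := exists_circuit_through hw hwg
      have hc3h : c3 h = 0 := by
        by_contra hch
        exact (hc3sub h hch) hwh
      have hc4h : c4 h = 0 := by
        by_contra hch
        exact (hc4sub h hch) hwh
      have hhxy : h ∈ suppF x ∪ suppF y := Finset.mem_union_left _ (mem_suppF.2 hxh)
      by_cases hmeet34 : ∃ p, c3 p ≠ 0 ∧ c4 p ≠ 0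
      · apply ih c3 c4 hc3 hc4 ?_ e g hc3e hc4g hmeet34
        have hsubE : suppF c3 ∪ suppF c4 ⊆ (suppF x ∪ suppF y).erase h := by
          intro p hp
          have hpw : (x + y) p ≠ 0 := by
            rcases Finset.mem_union.1 hp with hp | hp
            · exact hc3sub p (mem_suppF.1 hp)
            · exact hc4sub p (mem_suppF.1 hp)
          have hpne : p ≠ h := by
            intro hph
            rw [hph] at hpw
            exact hpw hwh
          refine Finset.mem_erase.2 ⟨hpne, ?_⟩
          rcases hwsub p hpw with hh | hh
          · exact Finset.mem_union_left _ (mem_suppF.2 hh)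
          · exact Finset.mem_union_right _ (mem_suppF.2 hh)
        have h1 := Finset.card_le_card hsubE
        rw [Finset.card_erase_of_mem hhxy] at h1
        have := Finset.card_pos.2 ⟨h, hhxy⟩
        omega
      · push_neg at hmeet34
        have hc4x : ∃ q, c4 q ≠ 0 ∧ x q ≠ 0 := by
          by_contra hno
          push_neg at hno
          have hsuby : ∀ q, c4 q ≠ 0 → y q ≠ 0 := by
            intro q hq
            rcases hwsub q (hc4sub q hq) with hh | hh
            · exact absurd hh (by rw [hno q hq]; exact fun hc => hc rfl)
            · exact hh
          rcases hy.eq_of_subset hc4.mem_cycleSpace hsuby with h0 | heq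
          · exact hc4.ne_zero h0
          · rw [heq] at hc4h
            exact hyh hc4h
        obtain ⟨q, hq4, hqx⟩ := hc4x
        have hsub1 : suppF x ∪ suppF c4 ⊆ suppF x ∪ suppF y := by
          intro p hp
          rcases Finset.mem_union.1 hp with hp | hp
          · exact Finset.mem_union_left _ hp
          · rcases hwsub p (hc4sub p (mem_suppF.1 hp)) with hh | hh
            · exact Finset.mem_union_left _ (mem_suppF.2 hh)
            · exact Finset.mem_union_right _ (mem_suppF.2 hh)
        by_cases hstrict : (suppF x ∪ suppF c4).card ≤ n
        · exact ih x c4 hx hc4 hstrict e g he hc4g ⟨q, hqx, hq4⟩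
        · have hEq : suppF x ∪ suppF c4 = suppF x ∪ suppF y :=
            Finset.eq_of_subset_of_card_le hsub1 (by omega)
          have hc3y : ∃ q', c3 q' ≠ 0 ∧ y q' ≠ 0 := by
            by_contra hno
            push_neg at hno
            have hsubx : ∀ q', c3 q' ≠ 0 → x q' ≠ 0 := by
              intro q' hq
              rcases hwsub q' (hc3sub q' hq) with hh | hh
              · exact hh
              · exact absurd hh (by rw [hno q' hq]; exact fun hc => hc rfl)
            rcases hx.eq_of_subset hc3.mem_cycleSpace hsubx with h0 | heq
            · exact hc3.ne_zero h0
            · rw [heq] at hc3h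
              exact hxh hc3h
          obtain ⟨q', hq3, hqy⟩ := hc3y
          have hsub2 : suppF c3 ∪ suppF y ⊆ suppF x ∪ suppF y := by
            intro p hp
            rcases Finset.mem_union.1 hp with hp | hp
            · rcases hwsub p (hc3sub p (mem_suppF.1 hp)) with hh | hh
              · exact Finset.mem_union_left _ (mem_suppF.2 hh)
              · exact Finset.mem_union_right _ (mem_suppF.2 hh)
            · exact Finset.mem_union_right _ hp
          by_cases hstrict2 : (suppF c3 ∪ suppF y).card ≤ n
          · exact ih c3 y hc3 hy hstrict2 e g hc3e hg ⟨q', hq3, hqy⟩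
          · have hEq2 : suppF c3 ∪ suppF y = suppF x ∪ suppF y :=
              Finset.eq_of_subset_of_card_le hsub2 (by omega)
            exfalso
            have hc3subx : ∀ p, c3 p ≠ 0 → x p ≠ 0 := by
              intro p hp
              by_contra hxp
              have hxp' : x p = 0 := hxp
              have hyp : y p ≠ 0 := by
                rcases hwsub p (hc3sub p hp) with hh | hh
                · exact absurd hxp' hh
                · exact hh
              have hpc4 : p ∈ suppF x ∪ suppF c4 :=
                hEq ▸ (Finset.mem_union_right _ (mem_suppF.2 hyp))
              rcases Finset.mem_union.1 hpc4 with hh | hh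
              · exact (mem_suppF.1 hh) hxp'
              · exact (mem_suppF.1 hh) (hmeet34 p hp)
            rcases hx.eq_of_subset hc3.mem_cycleSpace hc3subx with h0 | heq
            · exact hc3.ne_zero h0
            · rw [heq] at hc3h
              exact hxh hc3h

lemma blockRel_iff {e f : G.E} :
    G.BlockRel e f ↔ e = f ∨ ∃ c, G.IsCircuit c ∧ c e ≠ 0 ∧ c f ≠ 0 := by
  constructor
  · rintro (rfl | ⟨n, vs, es, hn, hcyc, ⟨i, hi⟩, ⟨j, hj⟩⟩)
    · exact Or.inl rfl
    · right
      refine ⟨cycleVec es, isCircuit_cycleVec hn hcyc, ?_, ?_⟩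
      · rw [cycleVec, if_pos ⟨i, hi⟩]
        exact one_ne_zero
      · rw [cycleVec, if_pos ⟨j, hj⟩]
        exact one_ne_zero
  · rintro (rfl | ⟨c, ⟨n, vs, es, hn, hcyc, hsupp⟩, hce, hcf⟩)
    · exact Or.inl rfl
    · exact Or.inr ⟨n, vs, es, hn, hcyc, (hsupp e).1 hce, (hsupp f).1 hcf⟩

lemma blockRel_refl (e : G.E) : G.BlockRel e e := Or.inl rfl

lemma blockRel_symm {e f : G.E} (h : G.BlockRel e f) : G.BlockRel f e := by
  rw [blockRel_iff] at h ⊢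
  rcases h with rfl | ⟨c, hc, h1, h2⟩
  · exact Or.inl rfl
  · exact Or.inr ⟨c, hc, h2, h1⟩

lemma blockRel_trans {e f g : G.E} (h1 : G.BlockRel e f) (h2 : G.BlockRel f g) :
    G.BlockRel e g := by
  rw [blockRel_iff] at h1 h2 ⊢
  rcases h1 with rfl | ⟨c1, hc1, hc1e, hc1f⟩
  · exact h2
  rcases h2 with rfl | ⟨c2, hc2, hc2f, hc2g⟩
  · exact Or.inr ⟨c1, hc1, hc1e, hc1f⟩
  obtain ⟨z, hz, hze, hzg⟩ := exists_circuit_both (suppF c1 ∪ suppF c2).card c1 c2 hc1 hc2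
    (le_refl _) e g hc1e hc2g ⟨f, hc1f, hc2f⟩
  exact Or.inr ⟨z, hz, hze, hzg⟩

/-- A circuit through an edge `f` related to `e` has all its edges related to `e`. -/
lemma blockRel_of_circuit {e f p : G.E} {c : G.E → ZMod 2} (hc : G.IsCircuit c)
    (hef : G.BlockRel e f) (hcf : c f ≠ 0) (hcp : c p ≠ 0) : G.BlockRel e p :=
  blockRel_trans hef (blockRel_iff.2 (Or.inr ⟨c, hc, hcf, hcp⟩))


/-- Restriction of a vector to a block (pointwise mask). -/
noncomputable def maskL (G : Multigraph) (e : G.E) :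
    (G.E → ZMod 2) →ₗ[ZMod 2] (G.E → ZMod 2) where
  toFun x := fun f => if G.BlockRel e f then x f else 0
  map_add' x y := funext fun f => by by_cases h : G.BlockRel e f <;> simp [h]
  map_smul' c x := funext fun f => by by_cases h : G.BlockRel e f <;> simp [h]

lemma maskL_mem {e : G.E} {x : G.E → ZMod 2} (hx : x ∈ G.cycleSpace) :
    G.maskL e x ∈ G.cycleSpace := by
  have hspan : Submodule.span (ZMod 2) {c : G.E → ZMod 2 | G.IsCircuit c} ≤
      G.cycleSpace ⊓ Submodule.comap (G.maskL e) G.cycleSpace := by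
    rw [Submodule.span_le]
    intro c hc
    have hc' : G.IsCircuit c := hc
    refine Submodule.mem_inf.2 ⟨hc'.mem_cycleSpace, Submodule.mem_comap.2 ?_⟩
    by_cases hcase : ∃ f, G.BlockRel e f ∧ c f ≠ 0
    · obtain ⟨f₀, hbr, hcf₀⟩ := hcase
      have hmc : G.maskL e c = c := by
        funext f
        show (if G.BlockRel e f then c f else 0) = c f
        by_cases h : G.BlockRel e f
        · rw [if_pos h]
        · rw [if_neg h]
          by_cases hcf : c f = 0
          · exact hcf.symm
          · exact absurd (blockRel_of_circuit hc' hbr hcf₀ hcf) h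
      rw [hmc]
      exact hc'.mem_cycleSpace
    · push_neg at hcase
      have hmc : G.maskL e c = 0 := by
        funext f
        show (if G.BlockRel e f then c f else 0) = 0
        by_cases h : G.BlockRel e f
        · rw [if_pos h]
          exact hcase f h
        · rw [if_neg h]
      rw [hmc]
      exact Submodule.zero_mem _
  have hmem : x ∈ Submodule.span (ZMod 2) {c : G.E → ZMod 2 | G.IsCircuit c} := by
    rw [← cycleSpace_eq_span]
    exact hx
  exact (Submodule.mem_inf.1 (hspan hmem)).2

/-- Extension by zero from a spanning subgraph. -/
noncomputable def extL (G : Multigraph) (S : Set G.E) :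
    ((G.edgeRestrict S).E → ZMod 2) →ₗ[ZMod 2] (G.E → ZMod 2) where
  toFun y := fun f => if h : f ∈ S then y ⟨f, h⟩ else 0
  map_add' y z := funext fun f => by by_cases h : f ∈ S <;> simp [h] <;> rfl
  map_smul' c y := funext fun f => by by_cases h : f ∈ S <;> simp [h] <;> rfl

/-- Restriction of a vector to a spanning subgraph. -/
noncomputable def resL (G : Multigraph) (S : Set G.E) :
    (G.E → ZMod 2) →ₗ[ZMod 2] ((G.edgeRestrict S).E → ZMod 2) where
  toFun x := fun f => x f.1
  map_add' x y := rfl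
  map_smul' c x := rfl

lemma sum_subtype_univ (S : Set G.E) (F : G.E → ZMod 2) :
    ∑ f : (G.edgeRestrict S).E, F f.1 = ∑ f ∈ S.toFinset, F f := by
  refine Finset.sum_bij' (fun (a : (G.edgeRestrict S).E) _ => a.1)
    (fun b hb => (⟨b, Set.mem_toFinset.1 hb⟩ : (G.edgeRestrict S).E)) ?_ ?_ ?_ ?_ ?_
  · intro a _; exact Set.mem_toFinset.2 a.2
  · intro b _; exact Finset.mem_univ _
  · intro a _; rfl
  · intro b _; rfl
  · intro a _; rfl

lemma sum_inc_ext (S : Set G.E) (z : (G.edgeRestrict S).E → ZMod 2) (v : G.V) :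
    ∑ f : G.E, G.inc v f * G.extL S z f
      = ∑ f : (G.edgeRestrict S).E, (G.edgeRestrict S).inc v f * z f := by
  calc ∑ f : G.E, G.inc v f * G.extL S z f
      = ∑ f ∈ S.toFinset, G.inc v f * G.extL S z f := by
        symm
        apply Finset.sum_subset (Finset.subset_univ _)
        intro f _ hf
        have hfs : f ∉ S := fun h => hf (Set.mem_toFinset.2 h)
        show G.inc v f * (if h : f ∈ S then z ⟨f, h⟩ else 0) = 0
        rw [dif_neg hfs, mul_zero]
    _ = ∑ f : (G.edgeRestrict S).E, G.inc v f.1 * G.extL S z f.1 :=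
        (sum_subtype_univ S (fun f => G.inc v f * G.extL S z f)).symm
    _ = ∑ f : (G.edgeRestrict S).E, (G.edgeRestrict S).inc v f * z f := by
        apply Finset.sum_congr rfl
        intro f _
        show G.inc v f.1 * (if h : f.1 ∈ S then z ⟨f.1, h⟩ else 0) = _
        rw [dif_pos f.2]
        rfl

lemma extL_mem {S : Set G.E} {z : (G.edgeRestrict S).E → ZMod 2}
    (hz : z ∈ (G.edgeRestrict S).cycleSpace) : G.extL S z ∈ G.cycleSpace := by
  intro v
  rw [sum_inc_ext]
  exact hz v

lemma extL_resL {S : Set G.E} {x : G.E → ZMod 2} (hsupp : ∀ f, x f ≠ 0 → f ∈ S) :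
    G.extL S (G.resL S x) = x := by
  funext f
  show (if h : f ∈ S then x f else 0) = x f
  by_cases h : f ∈ S
  · rw [dif_pos h]
  · rw [dif_neg h]
    by_cases hx0 : x f = 0
    · exact hx0.symm
    · exact absurd (hsupp f hx0) h

lemma resL_mem {S : Set G.E} {x : G.E → ZMod 2} (hx : x ∈ G.cycleSpace)
    (hsupp : ∀ f, x f ≠ 0 → f ∈ S) : G.resL S x ∈ (G.edgeRestrict S).cycleSpace := by
  intro v
  exact (sum_inc_ext S (G.resL S x) v).symm.trans (by rw [extL_resL hsupp]; exact hx v)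

set_option maxHeartbeats 2000000 in
/-- From a spanning subset of the cycle space one can extract a finite cycle basis. -/
lemma exists_finset_basis_of_span {T : Set (G.E → ZMod 2)}
    (hT : ∀ z ∈ T, z ∈ G.cycleSpace)
    (hspan : Submodule.span (ZMod 2) T = G.cycleSpace) :
    ∃ B : Finset (G.E → ZMod 2), G.IsCycleBasis B ∧ ↑B ⊆ T := by
  obtain ⟨b, hbsub, hbspan, hbind⟩ := exists_linearIndependent (ZMod 2) T
  have hfin : b.Finite := Set.toFinite b
  refine ⟨hfin.toFinset, ⟨?_, ?_, ?_⟩, ?_⟩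
  · intro x hx
    exact hT x (hbsub (hfin.mem_toFinset.1 hx))
  · exact hbind.comp (fun x => ⟨x.1, hfin.mem_toFinset.1 x.2⟩)
      (fun x y hxy => Subtype.ext (congrArg Subtype.val hxy : _))
  · rw [hfin.coe_toFinset, hbspan]
    exact hspan
  · intro x hx
    exact hbsub (hfin.mem_toFinset.1 hx)

lemma exists_isKBasis (G : Multigraph) : ∃ k B, G.IsKBasis k B := by
  obtain ⟨B, hB, -⟩ := exists_finset_basis_of_span (T := (G.cycleSpace : Set (G.E → ZMod 2)))
    (fun z hz => hz) (Submodule.span_eq _)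
  refine ⟨B.card, B, hB, fun e => ?_⟩
  exact Finset.card_filter_le _ _

lemma basisNum_isKBasis (G : Multigraph) : ∃ B, G.IsKBasis G.basisNum B := by
  have hne : {k | ∃ B, G.IsKBasis k B}.Nonempty := by
    obtain ⟨k, B, h⟩ := exists_isKBasis G
    exact ⟨k, B, h⟩
  exact Nat.sInf_mem hne

lemma basisNum_le {k : ℕ} {B : Finset (G.E → ZMod 2)} (h : G.IsKBasis k B) :
    G.basisNum ≤ k := Nat.sInf_le ⟨B, h⟩


/-- Projection of the cycle space onto a block. -/
noncomputable def blockProj (G : Multigraph) (e : G.E) :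
    (G.E → ZMod 2) →ₗ[ZMod 2] ((G.edgeRestrict {f | G.BlockRel e f}).E → ZMod 2) :=
  (G.resL {f | G.BlockRel e f}).comp (G.maskL e)

lemma blockProj_apply (e : G.E) (x : G.E → ZMod 2)
    (fe : (G.edgeRestrict {f | G.BlockRel e f}).E) :
    G.blockProj e x fe = x fe.1 := by
  show (if G.BlockRel e fe.1 then x fe.1 else 0) = x fe.1
  exact if_pos fe.2

lemma maskL_supp {e : G.E} {x : G.E → ZMod 2} {f : G.E} (h : G.maskL e x f ≠ 0) :
    f ∈ {f | G.BlockRel e f} := by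
  by_contra hf
  apply h
  show (if G.BlockRel e f then x f else 0) = 0
  exact if_neg hf

lemma block_basisNum_le (G : Multigraph) (e : G.E) :
    (G.edgeRestrict {f | G.BlockRel e f}).basisNum ≤ G.basisNum := by
  obtain ⟨B, ⟨hBmem, hBind, hBspan⟩, hBcharge⟩ := G.basisNum_isKBasis
  set T : Set ((G.edgeRestrict {f | G.BlockRel e f}).E → ZMod 2) :=
    (G.blockProj e) '' ↑B with hT
  have hTmem : ∀ z ∈ T, z ∈ (G.edgeRestrict {f | G.BlockRel e f}).cycleSpace := by
    rintro z ⟨x, hxB, rfl⟩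
    exact resL_mem (maskL_mem (hBmem x hxB)) (fun f hf => maskL_supp hf)
  have hTspan : Submodule.span (ZMod 2) T =
      (G.edgeRestrict {f | G.BlockRel e f}).cycleSpace := by
    apply le_antisymm
    · rw [Submodule.span_le]
      exact hTmem
    · intro z hz
      have h1 : G.extL {f | G.BlockRel e f} z ∈ G.cycleSpace := extL_mem hz
      have h2 : G.extL {f | G.BlockRel e f} z ∈ Submodule.span (ZMod 2) (B : Set _) := by
        rw [hBspan]
        exact h1
      have h4 := Submodule.mem_map_of_mem (f := G.blockProj e) h2
      rw [Submodule.map_span] at h4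
      have h5 : G.blockProj e (G.extL {f | G.BlockRel e f} z) = z := by
        funext fe
        rw [blockProj_apply]
        show (if h : fe.1 ∈ {f | G.BlockRel e f} then z ⟨fe.1, h⟩ else 0) = z fe
        rw [dif_pos fe.2]
        rfl
      rw [h5] at h4
      exact h4
  obtain ⟨B', hB'basis, hB'sub⟩ := exists_finset_basis_of_span hTmem hTspan
  refine basisNum_le ⟨hB'basis, ?_⟩
  intro fe
  show ((B'.filter fun z => z fe ≠ 0)).card ≤ G.basisNum
  have h1 : ((B'.filter fun z => z fe ≠ 0)).card ≤
      ((B.filter fun x => x fe.1 ≠ 0)).card := by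
    apply Finset.card_le_card_of_surjOn (G.blockProj e)
    intro z hz
    have hz' := Finset.mem_coe.1 hz
    obtain ⟨hzB', hzfe⟩ := Finset.mem_filter.1 hz'
    obtain ⟨x, hxB, hxz⟩ := hB'sub (Finset.mem_coe.2 hzB')
    have hxfe : x fe.1 ≠ 0 := by
      rw [← hxz, blockProj_apply] at hzfe
      exact hzfe
    exact ⟨x, Finset.mem_coe.2 (Finset.mem_filter.2 ⟨Finset.mem_coe.1 hxB, hxfe⟩), hxz⟩
  exact le_trans h1 (hBcharge fe.1)


lemma blockRel_class_eq {e f : G.E} (h : G.BlockRel e f) :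
    {g | G.BlockRel e g} = {g | G.BlockRel f g} :=
  Set.ext fun g => ⟨fun hg => blockRel_trans (blockRel_symm h) hg,
    fun hg => blockRel_trans h hg⟩

lemma extL_supp {S : Set G.E} {y : (G.edgeRestrict S).E → ZMod 2} {f : G.E}
    (h : G.extL S y f ≠ 0) : f ∈ S := by
  by_contra hf
  apply h
  show (if h : f ∈ S then y ⟨f, h⟩ else 0) = 0
  rw [dif_neg hf]

/-- A fixed choice of an optimal basis of the cycle space. -/
noncomputable def chosenBasis (G : Multigraph) : Finset (G.E → ZMod 2) :=
  (basisNum_isKBasis G).choose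

lemma chosenBasis_spec (G : Multigraph) : G.IsKBasis G.basisNum (chosenBasis G) :=
  (basisNum_isKBasis G).choose_spec

/-- The extension to `G` of the chosen basis of the subgraph on `S`. -/
noncomputable def blockVecs (G : Multigraph) (S : Set G.E) : Set (G.E → ZMod 2) :=
  (G.extL S) '' ↑(chosenBasis (G.edgeRestrict S))

lemma transport_mem {S S' : Set G.E} (hSS : S = S') {f : G.E} (hf : f ∈ S)
    (hf' : f ∈ S') {y : (G.edgeRestrict S).E → ZMod 2}
    (hy : y ∈ chosenBasis (G.edgeRestrict S)) (hyf : y ⟨f, hf⟩ ≠ 0) :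
    G.extL S y ∈ ⇑(G.extL S') ''
      ↑(Finset.filter (fun y => y ⟨f, hf'⟩ ≠ 0) (chosenBasis (G.edgeRestrict S'))) := by
  subst hSS
  exact Set.mem_image_of_mem _ (Finset.mem_coe.2 (Finset.mem_filter.2 ⟨hy, hyf⟩))

lemma basisNum_le_sup (G : Multigraph) :
    G.basisNum ≤
      sSup {k | ∃ e : G.E, k = (G.edgeRestrict {f | G.BlockRel e f}).basisNum} := by
  classical
  have hbdd : BddAbove {k | ∃ e : G.E, k = (G.edgeRestrict {f | G.BlockRel e f}).basisNum} :=
    ⟨G.basisNum, by rintro k ⟨e, rfl⟩; exact block_basisNum_le G e⟩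
  set T : Set (G.E → ZMod 2) := ⋃ e : G.E, G.blockVecs {f | G.BlockRel e f} with hT
  have hTmem : ∀ z ∈ T, z ∈ G.cycleSpace := by
    intro z hz
    obtain ⟨s, ⟨e, rfl⟩, hzs⟩ := hz
    obtain ⟨y, hy, rfl⟩ := hzs
    exact extL_mem ((chosenBasis_spec _).1.1 y hy)
  have hTspan : Submodule.span (ZMod 2) T = G.cycleSpace := by
    apply le_antisymm
    · rw [Submodule.span_le]
      exact hTmem
    · intro x hx
      rw [cycleSpace_eq_span] at hx
      refine Submodule.span_le.2 ?_ hx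
      intro c hc
      have hc' : G.IsCircuit c := hc
      obtain ⟨e₀, he₀⟩ : ∃ f, c f ≠ 0 := by
        by_contra hno
        push_neg at hno
        exact hc'.ne_zero (funext fun f => hno f)
      have hsupp : ∀ f, c f ≠ 0 → f ∈ {f | G.BlockRel e₀ f} :=
        fun f hf => blockRel_of_circuit hc' (blockRel_refl e₀) he₀ hf
      have h1 : G.resL {f | G.BlockRel e₀ f} c ∈
          (G.edgeRestrict {f | G.BlockRel e₀ f}).cycleSpace :=
        resL_mem hc'.mem_cycleSpace hsupp
      have h2 : G.resL {f | G.BlockRel e₀ f} c ∈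
          Submodule.span (ZMod 2) ↑(chosenBasis (G.edgeRestrict {f | G.BlockRel e₀ f})) := by
        rw [(chosenBasis_spec _).1.2.2]
        exact h1
      have h4 := Submodule.mem_map_of_mem (f := G.extL {f | G.BlockRel e₀ f}) h2
      rw [Submodule.map_span] at h4
      rw [extL_resL hsupp] at h4
      refine Submodule.span_mono ?_ h4
      intro u hu
      exact Set.mem_iUnion.2 ⟨e₀, hu⟩
  obtain ⟨D, hDbasis, hDsub⟩ := exists_finset_basis_of_span hTmem hTspan
  refine basisNum_le ⟨hDbasis, ?_⟩
  intro f
  show ((D.filter fun z => z f ≠ 0)).card ≤ _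
  have hff : f ∈ {g | G.BlockRel f g} := blockRel_refl f
  have hsurj : ((D.filter fun z => z f ≠ 0)).card ≤
      (((chosenBasis (G.edgeRestrict {g | G.BlockRel f g})).filter
        fun y => y ⟨f, hff⟩ ≠ 0)).card := by
    apply Finset.card_le_card_of_surjOn (G.extL {g | G.BlockRel f g})
    intro z hz
    obtain ⟨hzD, hzf⟩ := Finset.mem_filter.1 (Finset.mem_coe.1 hz)
    have hzT : z ∈ T := hDsub (Finset.mem_coe.2 hzD)
    obtain ⟨s, ⟨e, rfl⟩, hzs⟩ := hzT
    obtain ⟨y, hy, rfl⟩ := hzs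
    have hbr : f ∈ {g | G.BlockRel e g} := extL_supp hzf
    have hclass : {g | G.BlockRel e g} = {g | G.BlockRel f g} := blockRel_class_eq hbr
    have hyf : y ⟨f, hbr⟩ ≠ 0 := by
      intro h0
      apply hzf
      show (if h : f ∈ {g | G.BlockRel e g} then y ⟨f, h⟩ else 0) = 0
      rw [dif_pos hbr]
      exact h0
    exact transport_mem hclass hbr hff (Finset.mem_coe.1 hy) hyf
  refine le_trans hsurj (le_trans ?_ (le_csSup hbdd ⟨f, rfl⟩))
  exact (chosenBasis_spec (G.edgeRestrict {g | G.BlockRel f g})).2 ⟨f, hff⟩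

end Multigraph

/-- For any graph `G`, the basis number of `G` equals the maximum of the basis
numbers of its blocks.  (Blocks are the classes of the equivalence relation "equal, or lying on
a common cycle" on edges, i.e. the maximal 2-connected subgraphs and bridges.) -/
theorem basisNum_eq_sup_blocks (G : Multigraph) :
    G.basisNum =
      sSup {k | ∃ e : G.E, k = (G.edgeRestrict {f | G.BlockRel e f}).basisNum} := by
  apply le_antisymm
  · exact Multigraph.basisNum_le_sup G
  · by_cases hE : Nonempty G.E
    · apply csSup_le
      · obtain ⟨e⟩ := hE
        exact ⟨_, e, rfl⟩
      · rintro k ⟨e, rfl⟩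
        exact Multigraph.block_basisNum_le G e
    · have hempty : {k | ∃ e : G.E, k = (G.edgeRestrict {f | G.BlockRel e f}).basisNum} = ∅ := by
        ext k
        constructor
        · rintro ⟨e, -⟩
          exact hE ⟨e⟩
        · intro hk
          exact absurd hk (Set.notMem_empty k)
      rw [hempty, csSup_empty]
      exact Nat.zero_le _
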